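/- arXiv:math/0006026 — 4 statements merged into one kernel-verified Lean document; each statement's English description precedes it below -/
import Mathlib

section
/- If x and y satisfy dx/dt = -(t - y²)/(t y) and dy/dt = 2xy/t (with t ≠ 0, y ≠ 0), then y satisfies y'' = (1/y)(y')² - (1/t)y' + 2y²/t² - 2/t (the Painlevé III equation of type D̃₈). -/
private lemma painleve_algebra (t b a : ℂ) (ht : t ≠ 0) (hb : b ≠ 0) :
    ((2 * (-(t - b ^ 2) / (t * b)) * b + 2 * a * (2 * a * b / t)) * t - 2 * a * b * 1) / t ^ 2
      = (1 / b) * (2 * a * b / t) ^ 2 - (1 / t) * (2 * a * b / t) + 2 * b ^ 2 / t ^ 2 - 2 / t := by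
  field_simp
  ring

/-- If `x' = -(t - y²)/(ty)` and `y' = 2xy/t` on an open set where `t ≠ 0` and `y ≠ 0`,
then `y` satisfies the Painlevé III equation of type D̃₈:
`y'' = (1/y)(y')² - (1/t)y' + 2y²/t² - 2/t`. -/
theorem painleveIII_D8_of_system (x y : ℂ → ℂ) (s : Set ℂ) (hs : IsOpen s)
    (hdom : ∀ t ∈ s, t ≠ 0 ∧ y t ≠ 0)
    (hx : ∀ t ∈ s, HasDerivAt x (-(t - (y t) ^ 2) / (t * y t)) t)
    (hy : ∀ t ∈ s, HasDerivAt y (2 * x t * y t / t) t) :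
    ∀ t ∈ s, deriv (deriv y) t =
      (1 / y t) * (deriv y t) ^ 2 - (1 / t) * deriv y t + 2 * (y t) ^ 2 / t ^ 2 - 2 / t := by
  intro t ht
  obtain ⟨ht0, hy0⟩ := hdom t ht
  have heq : deriv y =ᶠ[nhds t] fun u => 2 * x u * y u / u := by
    filter_upwards [hs.mem_nhds ht] with u hu
    exact (hy u hu).deriv
  have hxy : HasDerivAt (fun u => 2 * x u * y u) (2 * (-(t - (y t) ^ 2) / (t * y t)) * y t
      + 2 * x t * (2 * x t * y t / t)) t := by
    have := ((hx t ht).const_mul 2).mul (hy t ht)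
    simpa [mul_assoc, Pi.mul_def] using this
  have hD : HasDerivAt (fun u => 2 * x u * y u / u)
      (((2 * (-(t - (y t) ^ 2) / (t * y t)) * y t + 2 * x t * (2 * x t * y t / t)) * t
        - 2 * x t * y t * 1) / t ^ 2) t :=
    hxy.div (hasDerivAt_id t) ht0
  have h2 : deriv (deriv y) t = ((2 * (-(t - (y t) ^ 2) / (t * y t)) * y t
      + 2 * x t * (2 * x t * y t / t)) * t - 2 * x t * y t * 1) / t ^ 2 := by
    rw [heq.deriv_eq, hD.deriv]
  rw [h2, (hy t ht).deriv]
  exact painleve_algebra t (y t) (x t) ht0 hy0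
end

section
/- With F₂(x,y,t) = t - t y + x y², f₂(x,y,t) = -t² + 3tx - 2t³y + txy - 2x²y + 7t³y² - 8t³y³ - 8t²xy³ + 3t³y⁴ + 18t²xy⁴ - 10t²xy⁵ - 10tx²y⁵ + 11tx²y⁶ - 4x³y⁷, and g₂(x,y,t) = -t + t²y⁴ - 2t²y⁵ + t²y⁶ + 2txy⁶ - 2txy⁷ + x²y⁸, the identity ∂/∂t(1/F₂) + ∂/∂x(f₂/(t F₂²)) + ∂/∂y(g₂/(t F₂²)) = 0 holds wherever t ≠ 0 and F₂ ≠ 0. -/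
/-- `F₂(x,y,t) = t - ty + xy²`. -/
def F2 (x y t : ℂ) : ℂ := t - t * y + x * y ^ 2

/-- The explicit polynomial `f₂`. -/
def f2 (x y t : ℂ) : ℂ :=
  -t ^ 2 + 3 * t * x - 2 * t ^ 3 * y + t * x * y - 2 * x ^ 2 * y + 7 * t ^ 3 * y ^ 2
    - 8 * t ^ 3 * y ^ 3 - 8 * t ^ 2 * x * y ^ 3 + 3 * t ^ 3 * y ^ 4 + 18 * t ^ 2 * x * y ^ 4
    - 10 * t ^ 2 * x * y ^ 5 - 10 * t * x ^ 2 * y ^ 5 + 11 * t * x ^ 2 * y ^ 6 - 4 * x ^ 3 * y ^ 7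

/-- The explicit polynomial `g₂`. -/
def g2 (x y t : ℂ) : ℂ :=
  -t + t ^ 2 * y ^ 4 - 2 * t ^ 2 * y ^ 5 + t ^ 2 * y ^ 6 + 2 * t * x * y ^ 6
    - 2 * t * x * y ^ 7 + x ^ 2 * y ^ 8

/-- generic degree-8 polynomial -/
def P8 (a b c d e f g h i z : ℂ) : ℂ :=
  a + b * z + c * z ^ 2 + d * z ^ 3 + e * z ^ 4 + f * z ^ 5 + g * z ^ 6 + h * z ^ 7 + i * z ^ 8

/-- its derivative -/
def P8' (b c d e f g h i z : ℂ) : ℂ :=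
  b + 2 * c * z + 3 * d * z ^ 2 + 4 * e * z ^ 3 + 5 * f * z ^ 4 + 6 * g * z ^ 5
    + 7 * h * z ^ 6 + 8 * i * z ^ 7

lemma hasDerivAt_P8 (a b c d e f g h i u : ℂ) :
    HasDerivAt (P8 a b c d e f g h i) (P8' b c d e f g h i u) u := by
  have H : ∀ n : ℕ, HasDerivAt (fun z : ℂ => z ^ n) ((n : ℂ) * u ^ (n - 1)) u :=
    fun n => hasDerivAt_pow n u
  have h := ((((((((hasDerivAt_const u a).add ((H 1).const_mul b)).add
    ((H 2).const_mul c)).add ((H 3).const_mul d)).add ((H 4).const_mul e)).add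
    ((H 5).const_mul f)).add ((H 6).const_mul g)).add ((H 7).const_mul h)).add
    ((H 8).const_mul i)
  convert h using 1
  all_goals first
    | (funext z; simp only [P8, Pi.add_apply]; ring)
    | (simp only [P8']; push_cast; ring)
    | rfl

/-- The identity `∂/∂t(1/F₂) + ∂/∂x(f₂/(tF₂²)) + ∂/∂y(g₂/(tF₂²)) = 0`
holds wherever `t ≠ 0` and `F₂ ≠ 0`. -/
theorem fundamental_identity_D8 (x y t : ℂ) (ht : t ≠ 0) (hF : F2 x y t ≠ 0) :
    deriv (fun s => 1 / F2 x y s) t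
      + deriv (fun u => f2 u y t / (t * (F2 u y t) ^ 2)) x
      + deriv (fun v => g2 x v t / (t * (F2 x v t) ^ 2)) y = 0 := by
  have hden : t * F2 x y t ^ 2 ≠ 0 := mul_ne_zero ht (pow_ne_zero _ hF)
  -- term 1 : derivative in t
  have hD1 : HasDerivAt (fun s => F2 x y s) (P8' (1 - y) 0 0 0 0 0 0 0 t) t := by
    have heq : (fun s => F2 x y s) = P8 (x * y ^ 2) (1 - y) 0 0 0 0 0 0 0 := by
      funext s; simp [F2, P8]; ring
    rw [heq]; exact hasDerivAt_P8 _ _ _ _ _ _ _ _ _ _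
  have d1 : deriv (fun s => 1 / F2 x y s) t
      = (0 * F2 x y t - 1 * P8' (1 - y) 0 0 0 0 0 0 0 t) / F2 x y t ^ 2 :=
    (((hasDerivAt_const t (1 : ℂ)).div hD1 hF)).deriv
  -- term 2 : derivative in x
  have hN2 : HasDerivAt (fun u => f2 u y t)
      (P8' (3 * t + y * t - 8 * y ^ 3 * t ^ 2 + 18 * y ^ 4 * t ^ 2 - 10 * y ^ 5 * t ^ 2)
        (-2 * y - 10 * y ^ 5 * t + 11 * y ^ 6 * t) (-4 * y ^ 7) 0 0 0 0 0 x) x := by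
    have heq : (fun u => f2 u y t)
        = P8 (-t ^ 2 - 2 * y * t ^ 3 + 7 * y ^ 2 * t ^ 3 - 8 * y ^ 3 * t ^ 3 + 3 * y ^ 4 * t ^ 3)
          (3 * t + y * t - 8 * y ^ 3 * t ^ 2 + 18 * y ^ 4 * t ^ 2 - 10 * y ^ 5 * t ^ 2)
          (-2 * y - 10 * y ^ 5 * t + 11 * y ^ 6 * t) (-4 * y ^ 7) 0 0 0 0 0 := by
      funext u; simp [f2, P8]; ring
    rw [heq]; exact hasDerivAt_P8 _ _ _ _ _ _ _ _ _ _
  have hD2 : HasDerivAt (fun u => t * F2 u y t ^ 2)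
      (P8' (2 * y ^ 2 * t ^ 2 - 2 * y ^ 3 * t ^ 2) (y ^ 4 * t) 0 0 0 0 0 0 x) x := by
    have heq : (fun u => t * F2 u y t ^ 2)
        = P8 (t ^ 3 - 2 * y * t ^ 3 + y ^ 2 * t ^ 3)
          (2 * y ^ 2 * t ^ 2 - 2 * y ^ 3 * t ^ 2) (y ^ 4 * t) 0 0 0 0 0 0 := by
      funext u; simp [F2, P8]; ring
    rw [heq]; exact hasDerivAt_P8 _ _ _ _ _ _ _ _ _ _
  have d2 : deriv (fun u => f2 u y t / (t * (F2 u y t) ^ 2)) x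
      = (P8' (3 * t + y * t - 8 * y ^ 3 * t ^ 2 + 18 * y ^ 4 * t ^ 2 - 10 * y ^ 5 * t ^ 2)
          (-2 * y - 10 * y ^ 5 * t + 11 * y ^ 6 * t) (-4 * y ^ 7) 0 0 0 0 0 x
            * (t * F2 x y t ^ 2)
          - f2 x y t * P8' (2 * y ^ 2 * t ^ 2 - 2 * y ^ 3 * t ^ 2) (y ^ 4 * t) 0 0 0 0 0 0 x)
        / (t * F2 x y t ^ 2) ^ 2 :=
    (hN2.div hD2 hden).deriv
  -- term 3 : derivative in y
  have hN3 : HasDerivAt (fun v => g2 x v t)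
      (P8' 0 0 0 (t ^ 2) (-2 * t ^ 2) (t ^ 2 + 2 * x * t) (-2 * x * t) (x ^ 2) y) y := by
    have heq : (fun v => g2 x v t)
        = P8 (-t) 0 0 0 (t ^ 2) (-2 * t ^ 2) (t ^ 2 + 2 * x * t) (-2 * x * t) (x ^ 2) := by
      funext v; simp [g2, P8]; ring
    rw [heq]; exact hasDerivAt_P8 _ _ _ _ _ _ _ _ _ _
  have hD3 : HasDerivAt (fun v => t * F2 x v t ^ 2)
      (P8' (-2 * t ^ 3) (t ^ 3 + 2 * x * t ^ 2) (-2 * x * t ^ 2) (x ^ 2 * t) 0 0 0 0 y) y := by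
    have heq : (fun v => t * F2 x v t ^ 2)
        = P8 (t ^ 3) (-2 * t ^ 3) (t ^ 3 + 2 * x * t ^ 2) (-2 * x * t ^ 2) (x ^ 2 * t)
            0 0 0 0 := by
      funext v; simp [F2, P8]; ring
    rw [heq]; exact hasDerivAt_P8 _ _ _ _ _ _ _ _ _ _
  have d3 : deriv (fun v => g2 x v t / (t * (F2 x v t) ^ 2)) y
      = (P8' 0 0 0 (t ^ 2) (-2 * t ^ 2) (t ^ 2 + 2 * x * t) (-2 * x * t) (x ^ 2) y
            * (t * F2 x y t ^ 2)
          - g2 x y t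
            * P8' (-2 * t ^ 3) (t ^ 3 + 2 * x * t ^ 2) (-2 * x * t ^ 2) (x ^ 2 * t) 0 0 0 0 y)
        / (t * F2 x y t ^ 2) ^ 2 :=
    (hN3.div hD3 hden).deriv
  rw [d1, d2, d3]
  simp only [F2] at hF
  simp only [P8', F2, f2, g2]
  field_simp
  ring
end

section
/- The function H₁(x,y,t) = y² + x y⁴ + x/(t(1 + x y²)²) satisfies F₁² · ∂H₁/∂y = -f₁/(t F₁) and -F₁² · ∂H₁/∂x = -g₁/(t F₁), where F₁ = 1 + x y², f₁ = -2y(t - 2x² + 5txy² + 9tx²y⁴ + 7tx³y⁶ + 2tx⁴y⁸), and g₁ = 1 - xy² + ty⁴ + 3txy⁶ + 3tx²y⁸ + tx³y¹⁰. -/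
/-- `H₁(x,y,t) = y² + xy⁴ + x/(t(1+xy²)²)` satisfies `F₁²·∂H₁/∂y = -f₁/(tF₁)` and
`-F₁²·∂H₁/∂x = -g₁/(tF₁)`, with `F₁ = 1 + xy²` and the explicit polynomials `f₁`, `g₁`. -/
theorem H1_twisted_hamiltonian (x y t : ℂ) (ht : t ≠ 0) (hF : 1 + x * y ^ 2 ≠ 0) :
    (1 + x * y ^ 2) ^ 2 * deriv (fun v => v ^ 2 + x * v ^ 4 + x / (t * (1 + x * v ^ 2) ^ 2)) y =
      -(-2 * y * (t - 2 * x ^ 2 + 5 * t * x * y ^ 2 + 9 * t * x ^ 2 * y ^ 4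
          + 7 * t * x ^ 3 * y ^ 6 + 2 * t * x ^ 4 * y ^ 8)) / (t * (1 + x * y ^ 2)) ∧
    -((1 + x * y ^ 2) ^ 2 *
        deriv (fun u => y ^ 2 + u * y ^ 4 + u / (t * (1 + u * y ^ 2) ^ 2)) x) =
      -(1 - x * y ^ 2 + t * y ^ 4 + 3 * t * x * y ^ 6 + 3 * t * x ^ 2 * y ^ 8
          + t * x ^ 3 * y ^ 10) / (t * (1 + x * y ^ 2)) := by
  have hden : t * (1 + x * y ^ 2) ^ 2 ≠ 0 := mul_ne_zero ht (pow_ne_zero _ hF)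
  constructor
  · have hin : HasDerivAt (fun v : ℂ => 1 + x * v ^ 2) (x * (2 * y ^ 1)) y := by
      simpa using ((hasDerivAt_pow 2 y).const_mul x).const_add 1
    have hD : HasDerivAt (fun v : ℂ => t * (1 + x * v ^ 2) ^ 2)
        (t * (2 * (1 + x * y ^ 2) ^ 1 * (x * (2 * y ^ 1)))) y := (hin.pow 2).const_mul t
    have hq : HasDerivAt (fun v : ℂ => x / (t * (1 + x * v ^ 2) ^ 2))
        ((0 * (t * (1 + x * y ^ 2) ^ 2) - x * (t * (2 * (1 + x * y ^ 2) ^ 1 * (x * (2 * y ^ 1)))))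
          / (t * (1 + x * y ^ 2) ^ 2) ^ 2) y := (hasDerivAt_const y x).div hD hden
    have h := ((hasDerivAt_pow 2 y).add (((hasDerivAt_pow 4 y).const_mul x).add hq)).deriv
    simp only [Pi.add_def] at h
    rw [show (fun v : ℂ => v ^ 2 + x * v ^ 4 + x / (t * (1 + x * v ^ 2) ^ 2))
        = fun v => v ^ 2 + (x * v ^ 4 + x / (t * (1 + x * v ^ 2) ^ 2)) by funext v; ring, h]
    field_simp
    ring
  · have hin : HasDerivAt (fun u : ℂ => 1 + u * y ^ 2) (1 * y ^ 2) x := by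
      simpa using ((hasDerivAt_id x).mul_const (y ^ 2)).const_add 1
    have hD : HasDerivAt (fun u : ℂ => t * (1 + u * y ^ 2) ^ 2)
        (t * (2 * (1 + x * y ^ 2) ^ 1 * (1 * y ^ 2))) x := (hin.pow 2).const_mul t
    have hq : HasDerivAt (fun u : ℂ => u / (t * (1 + u * y ^ 2) ^ 2))
        ((1 * (t * (1 + x * y ^ 2) ^ 2) - x * (t * (2 * (1 + x * y ^ 2) ^ 1 * (1 * y ^ 2))))
          / (t * (1 + x * y ^ 2) ^ 2) ^ 2) x := (hasDerivAt_id x).div hD hden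
    have h := ((hasDerivAt_const x (y ^ 2)).add
      (((hasDerivAt_id x).mul_const (y ^ 4)).add hq)).deriv
    simp only [id_eq, Pi.add_def] at h
    rw [show (fun u : ℂ => y ^ 2 + u * y ^ 4 + u / (t * (1 + u * y ^ 2) ^ 2))
        = fun u => y ^ 2 + (u * y ^ 4 + u / (t * (1 + u * y ^ 2) ^ 2)) by funext u; ring, h]
    field_simp
    ring
end

section
/- Define vector fields θ₀ = [-y₀ + x₀² + t/2]∂/∂x₀ - [2x₀y₀ + α + 1/2]∂/∂y₀ in the (x₀,y₀)-chart and θ₁ = (1/2)[-2 - tx₁² - x₁³ - 2αx₁³ - 2x₁⁴y₁]∂/∂x₁ + (1/4)[(1 + 2α + 4x₁y₁)(t + x₁(1 + 2α + 2x₁y₁))]∂/∂y₁ in the (x₁,y₁)-chart. Then θ₀ and θ₁ correspond to the same vector field under the coordinate change x₁ = 1/x₀, y₁ = x₀(-(α+1/2) - x₀y₀). -/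
/-- The vector fields
`θ₀ = (-y₀+x₀²+t/2)∂/∂x₀ - (2x₀y₀+α+1/2)∂/∂y₀` and
`θ₁ = (1/2)(-2-tx₁²-x₁³-2αx₁³-2x₁⁴y₁)∂/∂x₁ + (1/4)(1+2α+4x₁y₁)(t+x₁(1+2α+2x₁y₁))∂/∂y₁`
correspond to the same vector field under `x₁ = 1/x₀`, `y₁ = x₀(-(α+1/2) - x₀y₀)`:
the pushforward of `θ₀` by the Jacobian of the coordinate change equals `θ₁` evaluated
at the image point. -/
theorem vector_fields_agree_PII (α t x₀ y₀ : ℂ) (hx : x₀ ≠ 0) :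
    (deriv (fun u => 1 / u) x₀ * (-y₀ + x₀ ^ 2 + t / 2)
        + deriv (fun _ : ℂ => (1 : ℂ) / x₀) y₀ * (-(2 * x₀ * y₀ + α + 1 / 2))
      = (1 / 2) * (-2 - t * (1 / x₀) ^ 2 - (1 / x₀) ^ 3 - 2 * α * (1 / x₀) ^ 3
          - 2 * (1 / x₀) ^ 4 * (x₀ * (-(α + 1 / 2) - x₀ * y₀)))) ∧
    (deriv (fun u => u * (-(α + 1 / 2) - u * y₀)) x₀ * (-y₀ + x₀ ^ 2 + t / 2)
        + deriv (fun v => x₀ * (-(α + 1 / 2) - x₀ * v)) y₀ * (-(2 * x₀ * y₀ + α + 1 / 2))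
      = (1 / 4) * ((1 + 2 * α + 4 * (1 / x₀) * (x₀ * (-(α + 1 / 2) - x₀ * y₀)))
          * (t + (1 / x₀) * (1 + 2 * α
              + 2 * (1 / x₀) * (x₀ * (-(α + 1 / 2) - x₀ * y₀)))))) := by
  have h1 : deriv (fun u : ℂ => 1 / u) x₀ = -1 / x₀ ^ 2 := by
    simp [deriv_inv', one_div]
    ring
  have h2 : deriv (fun _ : ℂ => (1 : ℂ) / x₀) y₀ = 0 := deriv_const _ _
  have h3 : deriv (fun u : ℂ => u * (-(α + 1 / 2) - u * y₀)) x₀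
      = -(α + 1 / 2) - 2 * x₀ * y₀ := by
    have : (fun u : ℂ => u * (-(α + 1 / 2) - u * y₀))
        = fun u : ℂ => -(α + 1 / 2) * u - y₀ * u ^ 2 := by
      funext u; ring
    rw [this]
    have hd : HasDerivAt (fun u : ℂ => -(α + 1 / 2) * u - y₀ * u ^ 2)
        (-(α + 1 / 2) - 2 * x₀ * y₀) x₀ := by
      have := ((hasDerivAt_id x₀).const_mul (-(α + 1 / 2))).sub
        (((hasDerivAt_pow 2 x₀)).const_mul y₀)
      simpa [Pi.sub_def] using this.congr_deriv (by ring)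
    exact hd.deriv
  have h4 : deriv (fun v : ℂ => x₀ * (-(α + 1 / 2) - x₀ * v)) y₀ = -x₀ ^ 2 := by
    have hd : HasDerivAt (fun v : ℂ => x₀ * (-(α + 1 / 2) - x₀ * v)) (-x₀ ^ 2) y₀ := by
      have := ((hasDerivAt_const y₀ (-(α + 1 / 2))).sub
        ((hasDerivAt_id y₀).const_mul x₀)).const_mul x₀
      simpa using this.congr_deriv (by ring)
    exact hd.deriv
  rw [h1, h2, h3, h4]
  constructor <;> (field_simp; ring_nf)
end
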